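/- Let λ be a nonempty Young diagram, N ≥ |λ|, 0 ≤ k ≤ N, and let S be an N⟨k⟩-standard set-valued pre-tableau of shape λ. Then sv((λ∖S)⁺)^{k−|λ∖S|} ≤ f^{λ,N,S}, where λ∖S = {(r,c) ∈ λ : S(r,c) = ∅} and (λ∖S)⁺ = (λ∖S) ∪ NW({(r,c) ∈ λ : S(r,c) ≠ ∅}). (Note |λ∖S| ≤ k, so the exponent is a nonnegative integer.) -/
import Mathlib


open Finset

/-- A Young diagram: a finite set of cells `(r,c)` with `r,c ≥ 1`, closed under
moving weakly north and west (staying in the positive quadrant). -/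
def IsYoung (μ : Finset (ℕ × ℕ)) : Prop :=
  ∀ p ∈ μ, 1 ≤ p.1 ∧ 1 ≤ p.2 ∧
    ∀ r' c' : ℕ, 1 ≤ r' → r' ≤ p.1 → 1 ≤ c' → c' ≤ p.2 → (r', c') ∈ μ

/-- The staircase `δ^k = {(r,c) : r,c ≥ 1, r + c ≤ k + 1}`. -/
def staircase (k : ℕ) : Finset (ℕ × ℕ) :=
  (Finset.Icc 1 k ×ˢ Finset.Icc 1 k).filter (fun p => p.1 + p.2 ≤ k + 1)

/-- `sv μ` is the largest `k` with `staircase k ⊆ μ` (it is `0` for `μ = ∅`). -/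
def sv (μ : Finset (ℕ × ℕ)) : ℕ :=
  Nat.findGreatest (fun k => staircase k ⊆ μ) μ.card

/-- The cells of `A` that are the unique element of `A` weakly northwest of themselves. -/
def NW (A : Finset (ℕ × ℕ)) : Finset (ℕ × ℕ) :=
  A.filter (fun p => ∀ q ∈ A, q.1 ≤ p.1 → q.2 ≤ p.2 → q = p)

/-- The hook of a cell `p` in `μ`. -/
def hook (μ : Finset (ℕ × ℕ)) (p : ℕ × ℕ) : Finset (ℕ × ℕ) :=
  μ.filter (fun q => (q.1 = p.1 ∧ p.2 < q.2) ∨ (q.2 = p.2 ∧ p.1 < q.1))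

/-- The maximum of a finite set of naturals (`0` for the empty set). -/
def maxv (s : Finset ℕ) : ℕ := s.sup id

/-- An `N⟨k⟩`-standard set-valued pre-tableau of shape `μ`. -/
structure IsPreSVT (μ : Finset (ℕ × ℕ)) (N k : ℕ) (S : ℕ × ℕ → Finset ℕ) : Prop where
  support : ∀ p, p ∉ μ → S p = ∅
  subset : ∀ p ∈ μ, S p ⊆ Finset.Icc (k + 1) N
  exactlyOnce : ∀ i ∈ Finset.Icc (k + 1) N, ∃! p, p ∈ μ ∧ i ∈ S p
  down_ne : ∀ r c : ℕ, (r, c) ∈ μ → (r + 1, c) ∈ μ →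
    (S (r, c)).Nonempty → (S (r + 1, c)).Nonempty
  right_ne : ∀ r c : ℕ, (r, c) ∈ μ → (r, c + 1) ∈ μ →
    (S (r, c)).Nonempty → (S (r, c + 1)).Nonempty
  down_lt : ∀ r c : ℕ, (r, c) ∈ μ → (r + 1, c) ∈ μ →
    ∀ a ∈ S (r, c), ∀ b ∈ S (r + 1, c), a < b
  right_lt : ∀ r c : ℕ, (r, c) ∈ μ → (r, c + 1) ∈ μ →
    ∀ a ∈ S (r, c), ∀ b ∈ S (r, c + 1), a < b
  empties : (μ.filter (fun p => S p = ∅)).card ≤ k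

/-- An `N`-standard set-valued tableau of shape `μ`: every cell gets a nonempty set,
each value `1,…,N` appears exactly once, rows and columns are strictly increasing. -/
def IsSVT (μ : Finset (ℕ × ℕ)) (N : ℕ) (T : ℕ × ℕ → Finset ℕ) : Prop :=
  IsPreSVT μ N 0 T

/-- The set of `N`-standard set-valued tableaux of shape `μ` containing `S`. -/
def SVTset (μ : Finset (ℕ × ℕ)) (N : ℕ) (S : ℕ × ℕ → Finset ℕ) :
    Set (ℕ × ℕ → Finset ℕ) :=
  {T | IsSVT μ N T ∧ ∀ p, S p ⊆ T p}

/-- `f^{μ,N,S}`, the number of `N`-standard set-valued tableaux of shape `μ` containing `S`. -/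
noncomputable def fSVT (μ : Finset (ℕ × ℕ)) (N : ℕ) (S : ℕ × ℕ → Finset ℕ) : ℕ :=
  (SVTset μ N S).ncard

/-- `f^{μ,N}`, the number of `N`-standard set-valued tableaux of shape `μ`. -/
noncomputable def fSVTall (μ : Finset (ℕ × ℕ)) (N : ℕ) : ℕ :=
  {T : ℕ × ℕ → Finset ℕ | IsSVT μ N T}.ncard

/-- A standard Young tableau of shape `μ`: a bijection from the cells of `μ`
to `{1,…,|μ|}` increasing along rows and columns (valued `0` off `μ`). -/
structure IsSYT (μ : Finset (ℕ × ℕ)) (F : ℕ × ℕ → ℕ) : Prop where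
  support : ∀ p, p ∉ μ → F p = 0
  mem_range : ∀ p ∈ μ, F p ∈ Finset.Icc 1 μ.card
  exactlyOnce : ∀ i ∈ Finset.Icc 1 μ.card, ∃! p, p ∈ μ ∧ F p = i
  down_lt : ∀ r c : ℕ, (r, c) ∈ μ → (r + 1, c) ∈ μ → F (r, c) < F (r + 1, c)
  right_lt : ∀ r c : ℕ, (r, c) ∈ μ → (r, c + 1) ∈ μ → F (r, c) < F (r, c + 1)

/-- `f^μ`, the number of standard Young tableaux of shape `μ`. -/
noncomputable def fSYT (μ : Finset (ℕ × ℕ)) : ℕ :=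
  {F : ℕ × ℕ → ℕ | IsSYT μ F}.ncard
/-! ### Auxiliary machinery for the construction -/

/-- Key function: a linear-extension key ordering cells by antidiagonal, then row. -/
def keyf (p : ℕ × ℕ) : ℕ := (p.1 + p.2) * (p.1 + p.2) + p.1

lemma keyf_lt_of_sum_lt {p q : ℕ × ℕ} (h : p.1 + p.2 < q.1 + q.2) : keyf p < keyf q := by
  have h1 : p.1 + p.2 + 1 ≤ q.1 + q.2 := h
  unfold keyf
  nlinarith

lemma sum_le_of_keyf_lt {p q : ℕ × ℕ} (h : keyf p < keyf q) : p.1 + p.2 ≤ q.1 + q.2 := by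
  by_contra hc
  push_neg at hc
  exact absurd (keyf_lt_of_sum_lt hc) (by omega)

lemma keyf_inj {p q : ℕ × ℕ} (h : keyf p = keyf q) : p = q := by
  have hsum : p.1 + p.2 = q.1 + q.2 := by
    rcases lt_trichotomy (p.1 + p.2) (q.1 + q.2) with hl | he | hg
    · exact absurd (keyf_lt_of_sum_lt hl) (by omega)
    · exact he
    · exact absurd (keyf_lt_of_sum_lt hg) (by omega)
  unfold keyf at h
  rw [hsum] at h
  have h1 : p.1 = q.1 := by omega
  have h2 : p.2 = q.2 := by omega
  exact Prod.ext_iff.mpr ⟨h1, h2⟩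

/-- Rank of a cell among cells of `E` with smaller key. -/
def rankf (E : Finset (ℕ × ℕ)) (p : ℕ × ℕ) : ℕ :=
  (E.filter (fun q => keyf q < keyf p)).card

/-- The filling function used to place the small values `1,…,k`. -/
def Ff (E : Finset (ℕ × ℕ)) (s m : ℕ) (p : ℕ × ℕ) : ℕ :=
  rankf E p + 1 + (if s + 1 ≤ p.1 + p.2 then m else 0)

lemma rankf_lt {E : Finset (ℕ × ℕ)} {p q : ℕ × ℕ} (hp : p ∈ E) (h : keyf p < keyf q) :
    rankf E p < rankf E q := by
  apply Finset.card_lt_card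
  rw [Finset.ssubset_iff_of_subset]
  · exact ⟨p, Finset.mem_filter.mpr ⟨hp, h⟩, by
      intro hc
      exact absurd (Finset.mem_filter.mp hc).2 (lt_irrefl _)⟩
  · intro x hx
    rw [Finset.mem_filter] at hx ⊢
    exact ⟨hx.1, lt_trans hx.2 h⟩

lemma Ff_lt {E : Finset (ℕ × ℕ)} {s m : ℕ} {p q : ℕ × ℕ} (hp : p ∈ E)
    (h : p.1 + p.2 < q.1 + q.2) : Ff E s m p < Ff E s m q := by
  have hk := keyf_lt_of_sum_lt h
  have hr := rankf_lt hp hk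
  unfold Ff
  split_ifs <;> omega

lemma Ff_injOn {E : Finset (ℕ × ℕ)} {s m : ℕ} {p q : ℕ × ℕ} (hp : p ∈ E) (hq : q ∈ E)
    (h : Ff E s m p = Ff E s m q) : p = q := by
  rcases lt_trichotomy (keyf p) (keyf q) with hl | he | hg
  · have hr := rankf_lt hp hl
    have hs := sum_le_of_keyf_lt hl
    unfold Ff at h
    split_ifs at h <;> omega
  · exact keyf_inj he
  · have hr := rankf_lt hq hg
    have hs := sum_le_of_keyf_lt hg
    unfold Ff at h
    split_ifs at h <;> omega

lemma Ff_pos (E : Finset (ℕ × ℕ)) (s m : ℕ) (p : ℕ × ℕ) : 1 ≤ Ff E s m p := by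
  unfold Ff; split_ifs <;> omega

lemma Ff_le_of_small {E : Finset (ℕ × ℕ)} {s m : ℕ} {p : ℕ × ℕ} (hp : p ∈ E)
    (hsum : p.1 + p.2 ≤ s) :
    Ff E s m p ≤ (E.filter (fun q => q.1 + q.2 ≤ s)).card := by
  have hsub : E.filter (fun q => keyf q < keyf p) ⊆
      (E.filter (fun q => q.1 + q.2 ≤ s)).erase p := by
    intro x hx
    rw [Finset.mem_filter] at hx
    rw [Finset.mem_erase, Finset.mem_filter]
    refine ⟨?_, hx.1, le_trans (sum_le_of_keyf_lt hx.2) hsum⟩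
    rintro rfl
    exact absurd hx.2 (lt_irrefl _)
  have hmem : p ∈ E.filter (fun q => q.1 + q.2 ≤ s) := Finset.mem_filter.mpr ⟨hp, hsum⟩
  have h1 : rankf E p ≤ ((E.filter (fun q => q.1 + q.2 ≤ s)).erase p).card :=
    Finset.card_le_card hsub
  rw [Finset.card_erase_of_mem hmem] at h1
  have h2 : 1 ≤ (E.filter (fun q => q.1 + q.2 ≤ s)).card :=
    Finset.card_pos.mpr ⟨p, hmem⟩
  unfold Ff
  rw [if_neg (by omega)]
  omega

lemma Ff_ge_of_big {E : Finset (ℕ × ℕ)} {s m : ℕ} {p : ℕ × ℕ} (hp : p ∈ E)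
    (hsum : s + 1 ≤ p.1 + p.2) :
    (E.filter (fun q => q.1 + q.2 ≤ s)).card + m + 1 ≤ Ff E s m p := by
  have hsub : E.filter (fun q => q.1 + q.2 ≤ s) ⊆ E.filter (fun q => keyf q < keyf p) := by
    intro x hx
    rw [Finset.mem_filter] at hx ⊢
    exact ⟨hx.1, keyf_lt_of_sum_lt (by omega)⟩
  have h1 := Finset.card_le_card hsub
  unfold Ff rankf
  rw [if_pos hsum]
  unfold rankf at h1
  omega

lemma Ff_le_card {E : Finset (ℕ × ℕ)} {s m : ℕ} {p : ℕ × ℕ} (hp : p ∈ E) :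
    Ff E s m p ≤ E.card + m := by
  have hsub : E.filter (fun q => keyf q < keyf p) ⊆ E.erase p := by
    intro x hx
    rw [Finset.mem_filter] at hx
    rw [Finset.mem_erase]
    exact ⟨by rintro rfl; exact absurd hx.2 (lt_irrefl _), hx.1⟩
  have h1 : rankf E p ≤ (E.erase p).card := Finset.card_le_card hsub
  rw [Finset.card_erase_of_mem hp] at h1
  have h2 : 1 ≤ E.card := Finset.card_pos.mpr ⟨p, hp⟩
  unfold Ff
  split_ifs <;> omega

lemma Ff_image (E : Finset (ℕ × ℕ)) (s m : ℕ) :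
    E.image (Ff E s m) =
      Finset.Icc 1 ((E.filter (fun q => q.1 + q.2 ≤ s)).card) ∪
        Finset.Icc ((E.filter (fun q => q.1 + q.2 ≤ s)).card + m + 1) (E.card + m) := by
  have hae : (E.filter (fun q => q.1 + q.2 ≤ s)).card ≤ E.card := Finset.card_filter_le _ _
  apply Finset.eq_of_subset_of_card_le
  · intro i hi
    rw [Finset.mem_image] at hi
    obtain ⟨p, hp, rfl⟩ := hi
    rw [Finset.mem_union, Finset.mem_Icc, Finset.mem_Icc]
    by_cases hsum : p.1 + p.2 ≤ s
    · exact Or.inl ⟨Ff_pos E s m p, Ff_le_of_small hp hsum⟩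
    · exact Or.inr ⟨Ff_ge_of_big hp (by omega), Ff_le_card hp⟩
  · have himg : (E.image (Ff E s m)).card = E.card :=
      Finset.card_image_of_injOn (fun p hp q hq h => Ff_injOn hp hq h)
    have hdisj : Disjoint
        (Finset.Icc 1 ((E.filter (fun q => q.1 + q.2 ≤ s)).card))
        (Finset.Icc ((E.filter (fun q => q.1 + q.2 ≤ s)).card + m + 1) (E.card + m)) := by
      rw [Finset.disjoint_left]
      intro x hx hx'
      rw [Finset.mem_Icc] at hx hx'
      omega
    rw [Finset.card_union_of_disjoint hdisj, Nat.card_Icc, Nat.card_Icc, himg]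
    omega

lemma Sempty_upclosed {lam : Finset (ℕ × ℕ)} (hY : IsYoung lam) {N k : ℕ}
    {S : ℕ × ℕ → Finset ℕ} (hS : IsPreSVT lam N k S) :
    ∀ q ∈ lam, S q = ∅ → ∀ p ∈ lam, p.1 ≤ q.1 → p.2 ≤ q.2 → S p = ∅ := by
  intro q hq hqE
  suffices H : ∀ d : ℕ, ∀ p ∈ lam, p.1 ≤ q.1 → p.2 ≤ q.2 →
      (q.1 - p.1) + (q.2 - p.2) = d → S p = ∅ by
    intro p hp h1 h2
    exact H _ p hp h1 h2 rfl
  intro d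
  induction d with
  | zero =>
    intro p hp h1 h2 hd
    have hpq : p = q := Prod.ext_iff.mpr ⟨by omega, by omega⟩
    rw [hpq]; exact hqE
  | succ d ih =>
    rintro ⟨r, c⟩ hp h1 h2 hd
    simp only at h1 h2 hd
    have hc1 : 1 ≤ c := (hY (r, c) hp).2.1
    have hr1 : 1 ≤ r := (hY (r, c) hp).1
    rcases Nat.lt_or_ge r q.1 with hlt | hge
    · have hp1 : (r + 1, c) ∈ lam := by
        obtain ⟨_, _, hcl⟩ := hY q hq
        exact hcl (r + 1) c (by omega) (by omega) hc1 h2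
      have h' : S (r + 1, c) = ∅ := ih (r + 1, c) hp1 (by omega) (by omega) (by simp; omega)
      by_contra hcon
      have hnon : (S (r, c)).Nonempty := Finset.nonempty_iff_ne_empty.mpr hcon
      have := hS.down_ne r c hp hp1 hnon
      rw [h'] at this
      exact absurd this Finset.not_nonempty_empty
    · have hc2 : c < q.2 := by omega
      have hp1 : (r, c + 1) ∈ lam := by
        obtain ⟨_, _, hcl⟩ := hY q hq
        exact hcl r (c + 1) (by omega) (by omega) (by omega) (by omega)
      have h' : S (r, c + 1) = ∅ := ih (r, c + 1) hp1 (by omega) (by omega) (by simp; omega)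
      by_contra hcon
      have hnon : (S (r, c)).Nonempty := Finset.nonempty_iff_ne_empty.mpr hcon
      have := hS.right_ne r c hp hp1 hnon
      rw [h'] at this
      exact absurd this Finset.not_nonempty_empty

lemma staircase_zero : staircase 0 = ∅ := by
  ext p
  simp only [staircase, Finset.mem_filter, Finset.mem_product, Finset.mem_Icc,
    Finset.notMem_empty, iff_false]
  omega

lemma staircase_sv_subset (μ : Finset (ℕ × ℕ)) : staircase (sv μ) ⊆ μ := by
  have h0 : staircase 0 ⊆ μ := by rw [staircase_zero]; exact Finset.empty_subset μ
  unfold sv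
  exact Nat.findGreatest_spec (P := fun k => staircase k ⊆ μ) (Nat.zero_le _) h0

lemma mem_staircase {k : ℕ} {p : ℕ × ℕ} :
    p ∈ staircase k ↔ 1 ≤ p.1 ∧ p.1 ≤ k ∧ 1 ≤ p.2 ∧ p.2 ≤ k ∧ p.1 + p.2 ≤ k + 1 := by
  simp only [staircase, Finset.mem_filter, Finset.mem_product, Finset.mem_Icc]
  tauto

theorem fSVT_sv_lower_bound (lam : Finset (ℕ × ℕ)) (hY : IsYoung lam)
    (hne : lam.Nonempty) (N k : ℕ) (hN : lam.card ≤ N) (hk : k ≤ N)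
    (S : ℕ × ℕ → Finset ℕ) (hS : IsPreSVT lam N k S) :
    (sv ((lam.filter (fun p => S p = ∅)) ∪
        NW (lam.filter (fun p => S p ≠ ∅)))) ^
          (k - (lam.filter (fun p => S p = ∅)).card)
      ≤ fSVT lam N S := by
  classical
  set E : Finset (ℕ × ℕ) := lam.filter (fun p => S p = ∅) with hEdef
  set A : Finset (ℕ × ℕ) := lam.filter (fun p => S p ≠ ∅) with hAdef
  set s : ℕ := sv (E ∪ NW A) with hsdef
  set a : ℕ := (E.filter (fun q => q.1 + q.2 ≤ s)).card with hadef
  set e : ℕ := E.card with hedef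
  set m : ℕ := k - e with hmdef
  have hek : e ≤ k := by rw [hedef, hEdef]; exact hS.empties
  have hkem : k = e + m := by omega
  have ham : a ≤ e := by rw [hadef, hedef]; exact Finset.card_filter_le _ _
  have hEmem : ∀ {p : ℕ × ℕ}, p ∈ E ↔ p ∈ lam ∧ S p = ∅ := by
    intro p; rw [hEdef]; exact Finset.mem_filter
  have hup : ∀ q ∈ E, ∀ p ∈ lam, p.1 ≤ q.1 → p.2 ≤ q.2 → p ∈ E := by
    intro q hq p hp h1 h2
    exact hEmem.mpr ⟨hp, Sempty_upclosed hY hS q (hEmem.mp hq).1 (hEmem.mp hq).2 p hp h1 h2⟩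
  have hstair : staircase s ⊆ E ∪ NW A := by rw [hsdef]; exact staircase_sv_subset _
  have hplam : ∀ p ∈ E ∪ NW A, p ∈ lam := by
    intro p hp
    rcases Finset.mem_union.mp hp with h | h
    · exact (hEmem.mp h).1
    · rw [NW] at h
      have h' := (Finset.mem_filter.mp h).1
      rw [hAdef] at h'
      exact (Finset.mem_filter.mp h').1
  have hNWE : ∀ d ∈ E ∪ NW A, ∀ p ∈ lam, p.1 ≤ d.1 → p.2 ≤ d.2 → p ≠ d → p ∈ E := by
    intro d hd p hp h1 h2 hne'
    rcases Finset.mem_union.mp hd with h | h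
    · exact hup d h p hp h1 h2
    · by_cases hpA : p ∈ A
      · rw [NW] at h
        exact absurd ((Finset.mem_filter.mp h).2 p hpA h1 h2) hne'
      · simp only [hAdef, Finset.mem_filter, not_and, not_not] at hpA
        exact hEmem.mpr ⟨hp, hpA hp⟩
  have hcell_mem : ∀ j : Fin s, ((j : ℕ) + 1, s - (j : ℕ)) ∈ staircase s := by
    intro j
    have hj := j.isLt
    rw [mem_staircase]
    refine ⟨by omega, by omega, by omega, by omega, by omega⟩
  set cellg : (Fin m → Fin s) → Fin m → ℕ × ℕ :=
    fun g j => ((g j : ℕ) + 1, s - (g j : ℕ)) with hcellgdef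
  set Φ : (Fin m → Fin s) → (ℕ × ℕ → Finset ℕ) := fun g p =>
    S p ∪ (if p ∈ E then {Ff E s m p} else ∅) ∪
      ((Finset.univ.filter (fun j : Fin m => cellg g j = p)).image
        (fun j : Fin m => a + 1 + (j : ℕ))) with hPhidef
  have hmem : ∀ g p i, i ∈ Φ g p ↔
      i ∈ S p ∨ (p ∈ E ∧ i = Ff E s m p) ∨
        ∃ j : Fin m, cellg g j = p ∧ i = a + 1 + (j : ℕ) := by
    intro g p i
    simp only [hPhidef]
    constructor
    · intro h
      rcases Finset.mem_union.mp h with h | h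
      · rcases Finset.mem_union.mp h with h | h
        · exact Or.inl h
        · by_cases hp : p ∈ E
          · rw [if_pos hp, Finset.mem_singleton] at h
            exact Or.inr (Or.inl ⟨hp, h⟩)
          · rw [if_neg hp] at h
            exact absurd h (Finset.notMem_empty i)
      · obtain ⟨j, hj, hji⟩ := Finset.mem_image.mp h
        exact Or.inr (Or.inr ⟨j, (Finset.mem_filter.mp hj).2, hji.symm⟩)
    · intro h
      rcases h with h | ⟨hp, rfl⟩ | ⟨j, hj, rfl⟩
      · exact Finset.mem_union_left _ (Finset.mem_union_left _ h)
      · refine Finset.mem_union_left _ (Finset.mem_union_right _ ?_)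
        rw [if_pos hp]
        exact Finset.mem_singleton_self _
      · exact Finset.mem_union_right _
          (Finset.mem_image.mpr ⟨j, Finset.mem_filter.mpr ⟨Finset.mem_univ _, hj⟩, rfl⟩)
  have hSr : ∀ p ∈ lam, ∀ i ∈ S p, k + 1 ≤ i ∧ i ≤ N := by
    intro p hp i hi
    have := hS.subset p hp hi
    rw [Finset.mem_Icc] at this
    omega
  have hFrk : ∀ p ∈ E, Ff E s m p ≤ k := by
    intro p hp
    have := Ff_le_card (s := s) (m := m) hp
    omega
  have hFsmall : ∀ p ∈ E, p.1 + p.2 ≤ s → Ff E s m p ≤ a := by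
    intro p hp h
    rw [hadef]
    exact Ff_le_of_small hp h
  have hFbig : ∀ p ∈ E, s + 1 ≤ p.1 + p.2 → a + m + 1 ≤ Ff E s m p := by
    intro p hp h
    rw [hadef]
    exact Ff_ge_of_big hp h
  have hFnot : ∀ p ∈ E, Ff E s m p ≤ a ∨ a + m + 1 ≤ Ff E s m p := by
    intro p hp
    by_cases h : p.1 + p.2 ≤ s
    · exact Or.inl (hFsmall p hp h)
    · exact Or.inr (hFbig p hp (by omega))
  have hsurj : ∀ i, 1 ≤ i → i ≤ k → (i ≤ a ∨ a + m + 1 ≤ i) → ∃ p ∈ E, Ff E s m p = i := by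
    intro i h1 h2 h3
    have hi : i ∈ E.image (Ff E s m) := by
      rw [Ff_image E s m, Finset.mem_union, Finset.mem_Icc, Finset.mem_Icc, ← hadef, ← hedef]
      rcases h3 with h | h
      · exact Or.inl ⟨h1, h⟩
      · exact Or.inr ⟨h, by omega⟩
    rwa [Finset.mem_image] at hi
  have hcell_mu : ∀ g j, cellg g j ∈ E ∪ NW A := fun g j => hstair (hcell_mem (g j))
  have hcell_lam : ∀ g j, cellg g j ∈ lam := fun g j => hplam _ (hcell_mu g j)
  have hcell_sum : ∀ g j, (cellg g j).1 + (cellg g j).2 = s + 1 := by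
    intro g j
    have := (g j).isLt
    show (g j : ℕ) + 1 + (s - (g j : ℕ)) = s + 1
    omega
  have hne' : ∀ g p, p ∈ lam → (Φ g p).Nonempty := by
    intro g p hp
    by_cases hpE : p ∈ E
    · exact ⟨Ff E s m p, (hmem g p _).mpr (Or.inr (Or.inl ⟨hpE, rfl⟩))⟩
    · have hSp : S p ≠ ∅ := fun h => hpE (hEmem.mpr ⟨hp, h⟩)
      obtain ⟨x, hx⟩ := Finset.nonempty_iff_ne_empty.mpr hSp
      exact ⟨x, (hmem g p x).mpr (Or.inl hx)⟩
  have hlt : ∀ g (p q : ℕ × ℕ), p ∈ lam → q ∈ lam → p.1 ≤ q.1 → p.2 ≤ q.2 →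
      p.1 + p.2 < q.1 + q.2 → (∀ x ∈ S p, ∀ y ∈ S q, x < y) →
      ∀ u ∈ Φ g p, ∀ v ∈ Φ g q, u < v := by
    intro g p q hp hq h1 h2 hsum hSlt u hu v hv
    rw [hmem] at hu hv
    have hpq : p ≠ q := by intro h; rw [h] at hsum; omega
    rcases hu with hu | ⟨hpE, rfl⟩ | ⟨j, hj, rfl⟩
    · rcases hv with hv | ⟨hqE, rfl⟩ | ⟨j, hj, rfl⟩
      · exact hSlt u hu v hv
      · have hpE := hup q hqE p hp h1 h2
        rw [(hEmem.mp hpE).2] at hu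
        exact absurd hu (Finset.notMem_empty u)
      · subst hj
        have hpE := hNWE _ (hcell_mu g j) p hp h1 h2 hpq
        rw [(hEmem.mp hpE).2] at hu
        exact absurd hu (Finset.notMem_empty u)
    · rcases hv with hv | ⟨hqE, rfl⟩ | ⟨j, hj, rfl⟩
      · have h5 := hFrk p hpE
        have h6 := (hSr q hq v hv).1
        omega
      · exact Ff_lt hpE hsum
      · subst hj
        have h5 : p.1 + p.2 ≤ s := by have := hcell_sum g j; omega
        have h6 := hFsmall p hpE h5
        omega
    · subst hj
      rcases hv with hv | ⟨hqE, rfl⟩ | ⟨j', hj', rfl⟩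
      · have h5 := (hSr q hq v hv).1
        have hjm := j.isLt
        omega
      · have h5 : s + 2 ≤ q.1 + q.2 := by have := hcell_sum g j; omega
        have h6 := hFbig q hqE (by omega)
        have hjm := j.isLt
        omega
      · exfalso
        have := hcell_sum g j
        have := hcell_sum g j'
        subst hj'
        omega
  have hSVT : ∀ g, Φ g ∈ SVTset lam N S := by
    intro g
    refine ⟨⟨?_, ?_, ?_, ?_, ?_, ?_, ?_, ?_⟩, ?_⟩
    · -- support
      intro p hp
      rw [Finset.eq_empty_iff_forall_notMem]
      intro i hi
      rcases (hmem g p i).mp hi with h | ⟨hpE, _⟩ | ⟨j, hj, _⟩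
      · rw [hS.support p hp] at h
        exact Finset.notMem_empty i h
      · exact hp (hEmem.mp hpE).1
      · exact hp (hj ▸ hcell_lam g j)
    · -- subset
      intro p hp i hi
      rw [Finset.mem_Icc]
      rcases (hmem g p i).mp hi with h | ⟨hpE, rfl⟩ | ⟨j, hj, rfl⟩
      · have := hSr p hp i h; omega
      · have := Ff_pos E s m p
        have := hFrk p hpE
        omega
      · have := j.isLt; omega
    · -- exactlyOnce
      intro i hi
      rw [Finset.mem_Icc] at hi
      by_cases hik : k + 1 ≤ i
      · obtain ⟨p, ⟨hp, hpS⟩, hpu⟩ := hS.exactlyOnce i (Finset.mem_Icc.mpr ⟨hik, hi.2⟩)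
        refine ⟨p, ⟨hp, (hmem g p i).mpr (Or.inl hpS)⟩, ?_⟩
        rintro q ⟨hq, hqi⟩
        rcases (hmem g q i).mp hqi with h | ⟨hqE, rfl⟩ | ⟨j, hj, rfl⟩
        · exact hpu q ⟨hq, h⟩
        · exfalso; have := hFrk q hqE; omega
        · exfalso; have := j.isLt; omega
      · by_cases hia : a + 1 ≤ i ∧ i ≤ a + m
        · obtain ⟨hi1, hi2⟩ := hia
          have hjlt : i - (a + 1) < m := by omega
          refine ⟨cellg g ⟨i - (a + 1), hjlt⟩,
            ⟨hcell_lam g _, (hmem g _ i).mpr (Or.inr (Or.inr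
              ⟨⟨i - (a + 1), hjlt⟩, rfl, by show i = a + 1 + (i - (a + 1)); omega⟩))⟩, ?_⟩
          rintro q ⟨hq, hqi⟩
          rcases (hmem g q i).mp hqi with h | ⟨hqE, rfl⟩ | ⟨j', hj', rfl⟩
          · exfalso; have := (hSr q hq i h).1; omega
          · exfalso; rcases hFnot q hqE with h | h <;> omega
          · have hj : j' = ⟨a + 1 + (j' : ℕ) - (a + 1), hjlt⟩ := by
              apply Fin.ext
              show (j' : ℕ) = a + 1 + (j' : ℕ) - (a + 1)
              omega
            rw [← hj']
            rw [← hj]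
        · have hiam : i ≤ a ∨ a + m + 1 ≤ i := by omega
          obtain ⟨p, hpE, hpF⟩ := hsurj i hi.1 (by omega) hiam
          refine ⟨p, ⟨(hEmem.mp hpE).1, (hmem g p i).mpr (Or.inr (Or.inl ⟨hpE, hpF.symm⟩))⟩, ?_⟩
          rintro q ⟨hq, hqi⟩
          rcases (hmem g q i).mp hqi with h | ⟨hqE, hqF⟩ | ⟨j, hj, rfl⟩
          · exfalso; have := (hSr q hq i h).1; omega
          · exact Ff_injOn hqE hpE (by rw [← hqF, hpF])
          · exfalso; have := j.isLt; omega
    · -- down_ne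
      intro r c h1 h2 _
      exact hne' g _ h2
    · -- right_ne
      intro r c h1 h2 _
      exact hne' g _ h2
    · -- down_lt
      intro r c h1 h2 u hu v hv
      exact hlt g (r, c) (r + 1, c) h1 h2 (by show r ≤ r + 1; omega) (le_refl c)
        (by show r + c < r + 1 + c; omega) (hS.down_lt r c h1 h2) u hu v hv
    · -- right_lt
      intro r c h1 h2 u hu v hv
      exact hlt g (r, c) (r, c + 1) h1 h2 (le_refl r) (by show c ≤ c + 1; omega)
        (by show r + c < r + (c + 1); omega) (hS.right_lt r c h1 h2) u hu v hv
    · -- empties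
      have hfe : lam.filter (fun p => Φ g p = ∅) = ∅ := by
        rw [Finset.filter_eq_empty_iff]
        intro p hp
        exact Finset.nonempty_iff_ne_empty.mp (hne' g p hp)
      rw [hfe]
      simp
    · -- contains S
      intro p i hi
      exact (hmem g p i).mpr (Or.inl hi)
  have hinj : Function.Injective Φ := by
    intro g g' hgg
    funext j
    have hiu : (a + 1 + (j : ℕ)) ∈ Φ g (cellg g j) :=
      (hmem g _ _).mpr (Or.inr (Or.inr ⟨j, rfl, rfl⟩))
    rw [hgg] at hiu
    rcases (hmem g' _ _).mp hiu with h | ⟨hqE, hF⟩ | ⟨j', hj', hval⟩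
    · exfalso
      have := (hSr _ (hcell_lam g j) _ h).1
      have := j.isLt
      omega
    · exfalso
      rcases hFnot _ hqE with h' | h' <;>
        (rw [← hF] at h'; have := j.isLt; omega)
    · have hj'j : j' = j := Fin.ext (by omega)
      rw [hj'j] at hj'
      have hfst : (cellg g' j).1 = (cellg g j).1 := by rw [hj']
      have : (g' j : ℕ) + 1 = (g j : ℕ) + 1 := hfst
      exact Fin.ext (by omega)
  have hfin : (SVTset lam N S).Finite := by
    have hsub : SVTset lam N S ⊆
        (fun f : ↥lam → ↥((Finset.Icc 1 N).powerset) =>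
          fun p : ℕ × ℕ => if h : p ∈ lam then (f ⟨p, h⟩ : Finset ℕ) else ∅) '' Set.univ := by
      intro T hT
      refine ⟨fun p => ⟨T p.1, Finset.mem_powerset.mpr ?_⟩, Set.mem_univ _, ?_⟩
      · exact hT.1.subset p.1 p.2
      · funext p
        by_cases hp : p ∈ lam
        · simp [hp]
        · simp [hp, hT.1.support p hp]
    exact Set.Finite.subset (Set.Finite.image _ Set.finite_univ) hsub
  have hrange : Set.range Φ ⊆ SVTset lam N S := by
    rintro _ ⟨g, rfl⟩
    exact hSVT g
  calc s ^ m = Nat.card (Fin m → Fin s) := by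
        simp [Nat.card_eq_fintype_card]
    _ = (Set.univ : Set (Fin m → Fin s)).ncard := (Set.ncard_univ _).symm
    _ = (Φ '' Set.univ).ncard := (Set.ncard_image_of_injective _ hinj).symm
    _ = (Set.range Φ).ncard := by rw [Set.image_univ]
    _ ≤ (SVTset lam N S).ncard := Set.ncard_le_ncard hrange hfin
    _ = fSVT lam N S := rfl
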